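/- Let G be a graph, B a PSD forcing set of G, and suppose v → w is a valid initial PSD force for B. Then B' = (B \ {v}) ∪ {w} is also a PSD forcing set of G (single-vertex migration). -/

import Mathlib

open SimpleGraph Set

variable {V : Type*}

/-- The subgraph of `G` obtained by deleting the vertices of `B`
(kept as isolated vertices). -/
def delVerts (G : SimpleGraph V) (B : Set V) : SimpleGraph V where
  Adj a b := G.Adj a b ∧ a ∉ B ∧ b ∉ B
  symm := by
    first
    | exact fun _ _ ⟨h, ha, hb⟩ => ⟨h.symm, hb, ha⟩
    | exact ⟨fun _ _ ⟨h, ha, hb⟩ => ⟨h.symm, hb, ha⟩⟩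
  loopless := ⟨fun a ⟨h, _, _⟩ => G.ne_of_adj h rfl⟩

/-- `u` may PSD-force `w` when the set of blue vertices is `B`:  `u` is blue, `w` is a white
neighbor of `u`, and `w` is the unique white neighbor of `u` in the component of `G - B`
containing `w`. -/
def PSDForce (G : SimpleGraph V) (B : Set V) (u w : V) : Prop :=
  u ∈ B ∧ w ∉ B ∧ G.Adj u w ∧
    ∀ x, G.Adj u x → x ∉ B → (delVerts G B).Reachable x w → x = w

/-- One round of simultaneous PSD forcing starting from blue set `B`. -/
def psdStep (G : SimpleGraph V) (B : Set V) : Set V :=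
  B ∪ {w | ∃ u, PSDForce G B u w}

/-- `B` is a PSD forcing set of `G`. -/
def IsPSDForcingSet (G : SimpleGraph V) (B : Set V) : Prop :=
  ∃ t, (psdStep G)^[t] B = Set.univ

/-- The PSD propagation time `pt_+(G; B)` of the set `B` in `G`. -/
noncomputable def psdPropTime (G : SimpleGraph V) (B : Set V) : ℕ :=
  sInf {t | (psdStep G)^[t] B = Set.univ}

/-- The PSD zero forcing number `Z_+(G)`. -/
noncomputable def psdZ (G : SimpleGraph V) : ℕ :=
  sInf {k | ∃ B : Set V, IsPSDForcingSet G B ∧ B.ncard = k}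

/-- The `k`-PSD propagation time `pt_+(G, k)`: the minimum of `pt_+(G; B)` over
PSD forcing sets `B` of size `k`. -/
noncomputable def psdPt (G : SimpleGraph V) (k : ℕ) : ℕ :=
  sInf {t | ∃ B : Set V, IsPSDForcingSet G B ∧ B.ncard = k ∧ psdPropTime G B = t}

/-- The PSD propagation time `pt_+(G) = pt_+(G, Z_+(G))`. -/
noncomputable def psdPtG (G : SimpleGraph V) : ℕ := psdPt G (psdZ G)

/-- The PSD propagation time of `B` within the induced subgraph `G[U]` (for `B ⊆ U`),
realized by making the vertices outside `U` isolated and initially blue. -/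
noncomputable def psdPropTimeOn (G : SimpleGraph V) (U B : Set V) : ℕ :=
  psdPropTime (delVerts G Uᶜ) (B ∪ Uᶜ)

/-- The vertex set of the component of `G - B` containing the white vertex `w`. -/
def compOf (G : SimpleGraph V) (B : Set V) (w : V) : Set V :=
  {x | x ∉ B ∧ (delVerts G B).Reachable x w}

lemma delVerts_le_of_subset (G : SimpleGraph V) {B C : Set V} (h : B ⊆ C) :
    delVerts G C ≤ delVerts G B :=
  fun _ _ ⟨hadj, ha, hb⟩ => ⟨hadj, fun m => ha (h m), fun m => hb (h m)⟩

lemma psdStep_mono (G : SimpleGraph V) {B C : Set V} (h : B ⊆ C) :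
    psdStep G B ⊆ psdStep G C := by
  rintro y (hy | ⟨u, hu, hw, hadj, huniq⟩)
  · exact Or.inl (h hy)
  · by_cases hyC : y ∈ C
    · exact Or.inl hyC
    · refine Or.inr ⟨u, h hu, hyC, hadj, fun x hx hxC hr => ?_⟩
      exact huniq x hx (fun hxB => hxC (h hxB)) (hr.mono (delVerts_le_of_subset G h))

lemma psdStep_iter_mono (G : SimpleGraph V) {B C : Set V} (h : B ⊆ C) (t : ℕ) :
    (psdStep G)^[t] B ⊆ (psdStep G)^[t] C := by
  induction t generalizing B C with
  | zero => exact h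
  | succ n ih =>
    rw [Function.iterate_succ_apply, Function.iterate_succ_apply]
    exact ih (psdStep_mono G h)

/-- single-vertex migration: if `B` is a PSD forcing set and `v → w` is a valid
initial PSD force for `B`, then `(B \ {v}) ∪ {w}` is a PSD forcing set. -/
theorem stmt2 (G : SimpleGraph V) (B : Set V) (v w : V)
    (hB : IsPSDForcingSet G B) (hforce : PSDForce G B v w) :
    IsPSDForcingSet G ((B \ {v}) ∪ {w}) := by
  obtain ⟨hvB, hwB, hadj, huniq⟩ := hforce
  set B' : Set V := (B \ {v}) ∪ {w} with hB'
  have hvw : v ≠ w := fun h => hwB (h ▸ hvB)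
  have hwB' : w ∈ B' := Or.inr rfl
  have hvB' : v ∉ B' := by
    rintro (⟨_, hv⟩ | hv)
    · exact hv rfl
    · exact hvw hv
  -- Key claim: no vertex of w's old white component reaches v in G - B'
  have key : ∀ (x y : V) (p : (delVerts G B').Walk x y),
      x ∉ B → (delVerts G B).Reachable x w → y = v → False := by
    intro x y p
    induction p with
    | nil => exact fun hxB _ hxy => hxB (hxy ▸ hvB)
    | @cons a b c hab p ih =>
      intro hxB hxw hcv
      obtain ⟨haG, haB', hbB'⟩ := hab
      by_cases hbv : b = v
      · have : a = w := huniq a (hbv ▸ haG).symm hxB hxw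
        exact haB' (this ▸ hwB')
      · have hbB : b ∉ B := by
          intro hb
          exact hbB' (Or.inl ⟨hb, fun h => hbv h⟩)
        have hbw : (delVerts G B).Reachable b w :=
          ((delVerts G B).adj_symm ⟨haG, hxB, hbB⟩ :
            (delVerts G B).Adj b a).reachable.trans hxw
        exact ih hbB hbw hcv
  -- w forces v from B'
  have hforce' : PSDForce G B' w v := by
    refine ⟨hwB', hvB', hadj.symm, fun x hx hxB' hr => ?_⟩
    by_contra hxv
    have hxB : x ∉ B := by
      intro hxBmem
      exact hxB' (Or.inl ⟨hxBmem, fun h => hxv h⟩)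
    have hxw : (delVerts G B).Reachable x w :=
      ((delVerts G B).adj_symm ⟨hx, hwB, hxB⟩ : (delVerts G B).Adj x w).reachable
    obtain ⟨p⟩ := hr
    exact key x v p hxB hxw rfl
  have hsub : B ∪ {w} ⊆ psdStep G B' := by
    rintro y (hy | hy)
    · by_cases hyv : y = v
      · exact Or.inr ⟨w, hyv ▸ hforce'⟩
      · exact Or.inl (Or.inl ⟨hy, hyv⟩)
    · exact Or.inl (Or.inr hy)
  obtain ⟨t, ht⟩ := hB
  refine ⟨t + 1, ?_⟩
  apply Set.eq_univ_of_univ_subset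
  calc Set.univ = (psdStep G)^[t] B := ht.symm
    _ ⊆ (psdStep G)^[t] (psdStep G B') :=
        psdStep_iter_mono G (fun y hy => hsub (Or.inl hy)) t
    _ = (psdStep G)^[t+1] B' := (Function.iterate_succ_apply (psdStep G) t B').symm
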